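/- Let S : ℝ^d → ℝ^d be a C¹ lower-triangular map (S_i depends only on y_1,…,y_i) with ∂S_i/∂y_i(y) > 0 for all y and i, and suppose each one-dimensional section y_i ↦ S_i(y_1,…,y_{i-1}, y_i) is surjective onto ℝ. Then S is a bijection from ℝ^d to ℝ^d. -/

import Mathlib

noncomputable def invAux {d : ℕ} (S : (Fin d → ℝ) → (Fin d → ℝ))
    (hsurj : ∀ (i : Fin d) (y : Fin d → ℝ),
      Function.Surjective (fun t : ℝ => S (Function.update y i t) i))
    (x : Fin d → ℝ) (i : Fin d) : ℝ :=
  Classical.choose (hsurj i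
    (fun j => if h : (j : ℕ) < (i : ℕ) then invAux S hsurj x j else 0) (x i))
termination_by i.val
decreasing_by all_goals assumption

theorem invAux_spec {d : ℕ} (S : (Fin d → ℝ) → (Fin d → ℝ))
    (hsurj : ∀ (i : Fin d) (y : Fin d → ℝ),
      Function.Surjective (fun t : ℝ => S (Function.update y i t) i))
    (x : Fin d → ℝ) (i : Fin d) :
    S (Function.update
        (fun j => if h : (j : ℕ) < (i : ℕ) then invAux S hsurj x j else 0) i
        (invAux S hsurj x i)) i = x i := by
  conv_lhs => rw [invAux]
  exact Classical.choose_spec (hsurj i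
    (fun j => if h : (j : ℕ) < (i : ℕ) then invAux S hsurj x j else 0) (x i))

/-- A `C¹` lower-triangular map `S` (each `S_i` depends only on `y_1,…,y_i`) with
positive diagonal partials `∂S_i/∂y_i > 0` whose one-dimensional sections are
surjective onto `ℝ` is a bijection of `ℝ^d`. -/
theorem stmt_16 {d : ℕ} (S : (Fin d → ℝ) → (Fin d → ℝ)) (hS : ContDiff ℝ 1 S)
    (htri : ∀ (i : Fin d) (y y' : Fin d → ℝ),
      (∀ j ≤ i, y j = y' j) → S y i = S y' i)
    (hpos : ∀ (y : Fin d → ℝ) (i : Fin d),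
      0 < fderiv ℝ (fun z => S z i) y (Pi.single i (1 : ℝ)))
    (hsurj : ∀ (i : Fin d) (y : Fin d → ℝ),
      Function.Surjective (fun t : ℝ => S (Function.update y i t) i)) :
    Function.Bijective S := by
  have hdiff : ∀ i : Fin d, Differentiable ℝ (fun z => S z i) := fun i =>
    (ContinuousLinearMap.proj i : ((Fin d → ℝ)) →L[ℝ] ℝ).differentiable.comp
      (hS.differentiable one_ne_zero)
  -- strict monotonicity of each one-dimensional section
  have hmono : ∀ (i : Fin d) (y : Fin d → ℝ),
      StrictMono (fun t : ℝ => S (Function.update y i t) i) := by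
    intro i y
    have hderiv : ∀ t : ℝ, HasDerivAt (fun t : ℝ => S (Function.update y i t) i)
        (fderiv ℝ (fun z => S z i) (Function.update y i t) (Pi.single i 1)) t := by
      intro t
      exact ((hdiff i (Function.update y i t)).hasFDerivAt).comp_hasDerivAt t
        (hasDerivAt_update y i t)
    apply strictMono_of_deriv_pos
    intro t
    rw [(hderiv t).deriv]
    exact hpos _ i
  constructor
  · -- injectivity
    intro y y' h
    have key : ∀ n : ℕ, ∀ i : Fin d, (i : ℕ) = n → y i = y' i := by
      intro n
      induction n using Nat.strong_induction_on with
      | _ n ih =>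
      intro i hi
      have hlt : ∀ j : Fin d, (j : ℕ) < (i : ℕ) → y j = y' j := fun j hj =>
        ih (j : ℕ) (hi ▸ hj) j rfl
      have e1 : S y i = S (Function.update y i (y' i)) i := by
        rw [show S y i = S y' i from congrFun h i]
        apply htri
        intro j hj
        rcases lt_or_eq_of_le hj with hj | hj
        · rw [Function.update_of_ne (Fin.ne_of_lt hj), hlt j hj]
        · subst hj; simp
      exact (hmono i y).injective (by simpa [Function.update_eq_self] using e1)
    exact funext fun i => key (i : ℕ) i rfl
  · -- surjectivity
    intro x
    refine ⟨invAux S hsurj x, funext fun i => ?_⟩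
    have := invAux_spec S hsurj x i
    rw [← this]
    apply htri
    intro j hj
    rcases lt_or_eq_of_le hj with hj' | hj'
    · rw [Function.update_of_ne (Fin.ne_of_lt hj')]
      rw [Fin.lt_def] at hj'
      rw [dif_pos hj']
    · subst hj'; simp
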